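/- Let w ∈ W_n and let w̃ be an ascending representative of the equivalence class of w under the relation ∼ generated by admissible operators. Then for each 0 ≤ i ≤ r−1, π_i(w) = sgn_i(w) if and only if π_i(w̃) = sgn_i(w̃). -/

import Mathlib

open scoped BigOperators

/-!
Common definitions: the complex reflection group `G(r,1,n)` recorded in one-line
notation, its one-dimensional representations, the generalized Robinson–Schensted
map to pairs of `r`-multitableaux, and the associated tableau statistics.
-/

/-- An element of `W_n = G(r,1,n)` in one-line notation
`w = [ζ^{a 0} σ 0, …, ζ^{a (n-1)} σ (n-1)]`: the nonzero entry of column `i`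
is `ζ ^ (a i)` and lies in row `σ i`. -/
@[ext]
structure GW (r n : ℕ) where
  a : Fin n → ZMod r
  σ : Equiv.Perm (Fin n)

namespace GW

variable {r n : ℕ}

instance : Mul (GW r n) := ⟨fun w v => ⟨fun j => w.a (v.σ j) + v.a j, w.σ * v.σ⟩⟩
instance : One (GW r n) := ⟨⟨fun _ => 0, 1⟩⟩
instance : Inv (GW r n) := ⟨fun w => ⟨fun j => -(w.a (w.σ⁻¹ j)), w.σ⁻¹⟩⟩

@[simp] lemma mul_a (w v : GW r n) (j : Fin n) : (w * v).a j = w.a (v.σ j) + v.a j := rfl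
@[simp] lemma mul_sigma (w v : GW r n) : (w * v).σ = w.σ * v.σ := rfl
@[simp] lemma one_a (j : Fin n) : (1 : GW r n).a j = 0 := rfl
@[simp] lemma one_sigma : (1 : GW r n).σ = 1 := rfl
@[simp] lemma inv_a (w : GW r n) (j : Fin n) : (w⁻¹).a j = -(w.a (w.σ⁻¹ j)) := rfl
@[simp] lemma inv_sigma (w : GW r n) : (w⁻¹).σ = w.σ⁻¹ := rfl

instance : Group (GW r n) where
  mul_assoc w v u := by
    ext j
    · simp [Equiv.Perm.mul_apply, add_assoc]
    · simp [mul_assoc]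
  one_mul w := by ext j <;> simp
  mul_one w := by ext j <;> simp
  inv_mul_cancel w := by
    ext j
    · simp
    · simp

end GW

/-- `ζ = exp(2π√-1 / r)`, a primitive `r`-th root of unity. -/
noncomputable def zeta (r : ℕ) : ℂ := Complex.exp (2 * Real.pi * Complex.I / r)

/-- The one-dimensional representation `sgn_i` of `W_n = G(r,1,n)`:
`sgn_i w = ζ^{i (a_1 + ⋯ + a_n)} ⬝ sgn σ`. -/
noncomputable def sgnRep (r n : ℕ) (i : ℕ) (w : GW r n) : ℂ :=
  zeta r ^ (i * ∑ j, (w.a j).val) * ((Equiv.Perm.sign w.σ : ℤ) : ℂ)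

/-- A tableau, recorded as its list of rows of labels. -/
abbrev Tab := List (List ℕ)

/-- Robinson–Schensted row insertion of the value `x` into a tableau. -/
def rowInsert : ℕ → Tab → Tab
  | x, [] => [[x]]
  | x, row :: rest =>
    if h : row.findIdx (fun y => decide (x < y)) < row.length then
      row.set (row.findIdx (fun y => decide (x < y))) x ::
        rowInsert (row.get ⟨row.findIdx (fun y => decide (x < y)), h⟩) rest
    else (row ++ [x]) :: rest

/-- The shape of a tableau: its list of row lengths. -/
def shape (T : Tab) : List ℕ := T.map List.length

/-- Append the label `lab` at the end of row `i` of the (recording) tableau `Q`. -/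
def place (Q : Tab) (i lab : ℕ) : Tab :=
  if i < Q.length then Q.set i ((Q.getD i []) ++ [lab]) else Q ++ [[lab]]

/-- One step of the Robinson–Schensted algorithm: insert the value `x` into the
insertion tableau and record the label `lab` in the new box of the recording
tableau. -/
def RSstep : Tab × Tab → ℕ × ℕ → Tab × Tab := fun PQ xl =>
  let P' := rowInsert xl.1 PQ.1
  let i := (List.range P'.length).findIdx
    (fun i => decide ((PQ.1.getD i []).length < (P'.getD i []).length))
  (P', place PQ.2 i xl.2)

/-- The classical Robinson–Schensted correspondence applied to a word of
(value, label) pairs, producing the insertion and recording tableaux. -/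
def RSword (word : List (ℕ × ℕ)) : Tab × Tab := word.foldl RSstep ([], [])

/-- The positions `i` (in increasing order) whose attached exponent `a i` equals `k`. -/
def labelIdx {r n : ℕ} (w : GW r n) (k : ℕ) : List (Fin n) :=
  (List.finRange n).filter (fun i => decide ((w.a i).val = k))

/-- The word `w^(k)` together with its recording labels: the values `σ i` (1-based)
attached to the positions `i` (1-based) with `a i = k`, in increasing order of `i`. -/
def wordPairs {r n : ℕ} (w : GW r n) (k : ℕ) : List (ℕ × ℕ) :=
  (labelIdx w k).map (fun i => ((w.σ i : ℕ) + 1, (i : ℕ) + 1))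

/-- The insertion multitableau `P(w)` of the generalized Robinson–Schensted map. -/
def Ptab {r n : ℕ} (w : GW r n) : Fin r → Tab := fun k => (RSword (wordPairs w k)).1

/-- The recording multitableau `Q(w)` of the generalized Robinson–Schensted map. -/
def Qtab {r n : ℕ} (w : GW r n) : Fin r → Tab := fun k => (RSword (wordPairs w k)).2

/-- The set of labels of a tableau. -/
def labels (T : Tab) : Finset ℕ := T.flatten.toFinset

/-- The (0-based) index of the row of `T` containing the label `x`. -/
def rowOf (T : Tab) (x : ℕ) : ℕ := T.findIdx (fun row => decide (x ∈ row))

/-- The number of inversions of a tableau: pairs `(i, j)` with `i < j` and the box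
labeled `i` in a row strictly below the box labeled `j`. -/
def invTab (T : Tab) : ℕ :=
  ((labels T ×ˢ labels T).filter (fun p => p.1 < p.2 ∧ rowOf T p.2 < rowOf T p.1)).card

/-- `crossInv S T` is the number of pairs `(j, i)` with `j > i`, `j` a label of `S`
and `i` a label of `T`, i.e. the cardinality of `Inv(S, T)`. -/
def crossInv (S T : Tab) : ℕ :=
  ((labels S ×ˢ labels T).filter (fun p => p.2 < p.1)).card

/-- The number of inversions of a multitableau. -/
def invMulti {r : ℕ} (T : Fin r → Tab) : ℕ :=
  (∑ k, invTab (T k)) + ∑ k, ∑ l, if k < l then crossInv (T k) (T l) else 0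

/-- The sign `(-1)^{inv T}` of a multitableau. -/
def signMulti {r : ℕ} (T : Fin r → Tab) : ℂ := (-1) ^ invMulti T

/-- The number of boxes in the even-indexed rows (1-based indexing) of a tableau. -/
def eTab (T : Tab) : ℕ :=
  ∑ i ∈ Finset.range T.length, if i % 2 = 1 then (T.getD i []).length else 0

/-- The total number of boxes in the even-indexed rows of a multitableau. -/
def eMulti {r : ℕ} (T : Fin r → Tab) : ℕ := ∑ k, eTab (T k)

/-- The number of boxes of a tableau. -/
def sizeTab (T : Tab) : ℕ := T.flatten.length

/-- `2 ⬝ spin T = Σ_k k ⬝ |sh(T_k)|`. -/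
def twoSpin {r : ℕ} (T : Fin r → Tab) : ℕ := ∑ k : Fin r, (k : ℕ) * sizeTab (T k)

/-- The spin statistic `spin T = (1/2) Σ_k k ⬝ |sh(T_k)|`. -/
def spin {r : ℕ} (T : Fin r → Tab) : ℚ := (twoSpin T : ℚ) / 2

/-- The function `π_i(w) = (-1)^{e(P)} (ζ^i)^{spin P + spin Q} sign(P) sign(Q)`
where `(P, Q) = RS(w)`. -/
noncomputable def piStat (r n : ℕ) (i : ℕ) (w : GW r n) : ℂ :=
  (-1) ^ eMulti (Ptab w) *
    (zeta r ^ i) ^ (((spin (Ptab w) + spin (Qtab w) : ℚ) : ℂ)) *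
    signMulti (Ptab w) * signMulti (Qtab w)

/-- `T` is a standard Young `r`-multitableau of rank `n`: each component consists of
nonempty rows of weakly decreasing lengths, labels strictly increase along rows and
down columns, and the labels used are exactly `1, …, n`, each exactly once. -/
def IsStandardMulti (r n : ℕ) (T : Fin r → Tab) : Prop :=
  (∀ k : Fin r,
      (∀ row ∈ T k, row ≠ [] ∧ List.Chain' (· < ·) row) ∧
      List.Chain' (fun r1 r2 => r2.length ≤ r1.length ∧
        ∀ j < r2.length, r1.getD j 0 < r2.getD j 0) (T k)) ∧
  (∑ k : Fin r, ((T k).flatten : Multiset ℕ)) = (Finset.Icc 1 n).val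

/-- A multitableau is ascending if every label of `T k` is smaller than every label
of `T (k+1)`. -/
def AscendingMulti {r : ℕ} (T : Fin r → Tab) : Prop :=
  ∀ (k : ℕ) (h : k + 1 < r),
    ∀ x ∈ labels (T ⟨k, by omega⟩), ∀ y ∈ labels (T ⟨k + 1, h⟩), x < y

/-- An element `w ∈ W_n` is ascending if its exponents increase weakly and, for each
`k < r - 1`, every element of the word `w^(k)` is smaller than every element of
`w^(k+1)`. -/
def AscendingElem {r n : ℕ} (w : GW r n) : Prop :=
  (∀ i j : Fin n, i ≤ j → (w.a i).val ≤ (w.a j).val) ∧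
  ∀ k : ℕ, k + 1 < r →
    ∀ x ∈ (wordPairs w k).map Prod.fst, ∀ y ∈ (wordPairs w (k + 1)).map Prod.fst, x < y

/-- The generator `s_0 = [ζ·1, 2, …, n]`. -/
def s0El (r n : ℕ) : GW r n := ⟨fun i => if (i : ℕ) = 0 then 1 else 0, 1⟩

/-- The generator `s_j` (for `1 ≤ j ≤ n - 1`): the permutation matrix of the
transposition interchanging `j` and `j + 1` (1-based values). -/
def sEl (r n : ℕ) (j : ℕ) (h1 : 1 ≤ j) (h2 : j + 1 ≤ n) : GW r n :=
  ⟨fun _ => 0, Equiv.swap ⟨j - 1, by omega⟩ ⟨j, by omega⟩⟩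

/-- The left operator `L_j(w) = s_j ⬝ w`. -/
def Lop {r n : ℕ} (w : GW r n) (j : ℕ) (h1 : 1 ≤ j) (h2 : j + 1 ≤ n) : GW r n :=
  sEl r n j h1 h2 * w

/-- The right operator `R_j(w) = w ⬝ s_j`. -/
def Rop {r n : ℕ} (w : GW r n) (j : ℕ) (h1 : 1 ≤ j) (h2 : j + 1 ≤ n) : GW r n :=
  w * sEl r n j h1 h2

/-- `L_j` is left admissible for `w`: the exponents attached to the entries with
values `j` and `j+1` differ. -/
def LeftAdm {r n : ℕ} (w : GW r n) (j : ℕ) (h1 : 1 ≤ j) (h2 : j + 1 ≤ n) : Prop :=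
  w.a (w.σ⁻¹ ⟨j - 1, by omega⟩) ≠ w.a (w.σ⁻¹ ⟨j, by omega⟩)

/-- `R_j` is right admissible for `w`: the exponents in positions `j` and `j+1`
differ, i.e. `a_j ≠ a_{j+1}`. -/
def RightAdm {r n : ℕ} (w : GW r n) (j : ℕ) (h1 : 1 ≤ j) (h2 : j + 1 ≤ n) : Prop :=
  w.a ⟨j - 1, by omega⟩ ≠ w.a ⟨j, by omega⟩

/-- A single admissible transformation: `w ↦ L_j(w)` for a left admissible `L_j`,
or `w ↦ R_j(w)` for a right admissible `R_j`. -/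
inductive AdmStep (r n : ℕ) : GW r n → GW r n → Prop
  | left (w : GW r n) (j : ℕ) (h1 : 1 ≤ j) (h2 : j + 1 ≤ n)
      (ha : LeftAdm w j h1 h2) : AdmStep r n w (Lop w j h1 h2)
  | right (w : GW r n) (j : ℕ) (h1 : 1 ≤ j) (h2 : j + 1 ≤ n)
      (ha : RightAdm w j h1 h2) : AdmStep r n w (Rop w j h1 h2)

namespace RSAux

def mapTab (f : ℕ → ℕ) (T : Tab) : Tab := T.map (List.map f)

lemma findIdx_map' {α β : Type} (f : α → β) (p : β → Bool) : ∀ (l : List α),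
    (l.map f).findIdx p = l.findIdx (fun x => p (f x))
  | [] => rfl
  | x :: xs => by
    simp only [List.map_cons, List.findIdx_cons]
    cases p (f x) <;> simp [findIdx_map' f p xs]

lemma findIdx_congr {α : Type} : ∀ {l : List α} {p q : α → Bool}, (∀ x ∈ l, p x = q x) →
    l.findIdx p = l.findIdx q
  | [], _, _, _ => rfl
  | x :: xs, p, q, h => by
    have hx : p x = q x := h x (by simp)
    have ih : xs.findIdx p = xs.findIdx q :=
      findIdx_congr (fun y hy => h y (List.mem_cons_of_mem _ hy))
    simp only [List.findIdx_cons, hx]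
    cases q x <;> simp [ih]

lemma set_append_perm : ∀ (l : List ℕ) (i : ℕ) (h : i < l.length) (x : ℕ),
    (l.set i x ++ [l.get ⟨i, h⟩]).Perm (x :: l)
  | a :: l, 0, _, x => by
    simpa using (List.perm_append_singleton a (x :: l)).trans (List.Perm.swap x a l)
  | a :: l, i + 1, h, x => by
    have ih := set_append_perm l i (by simpa using h) x
    simpa using ((ih.cons a).trans (List.Perm.swap x a l))

lemma rowInsert_flatten_perm (x : ℕ) : ∀ (T : Tab),
    (rowInsert x T).flatten.Perm (x :: T.flatten)
  | [] => by simp [rowInsert]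
  | row :: rest => by
    unfold rowInsert
    by_cases h : row.findIdx (fun y => decide (x < y)) < row.length
    · rw [dif_pos h]
      set i := row.findIdx (fun y => decide (x < y)) with hi
      have ih := rowInsert_flatten_perm (row.get ⟨i, h⟩) rest
      have p1 : ((row.set i x) ++ (rowInsert (row.get ⟨i, h⟩) rest).flatten).Perm
          ((row.set i x) ++ (row.get ⟨i, h⟩ :: rest.flatten)) := ih.append_left _
      have p2 : ((row.set i x) ++ (row.get ⟨i, h⟩ :: rest.flatten)).Perm
          ((x :: row) ++ rest.flatten) := by
        have := (set_append_perm row i h x).append_right rest.flatten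
        simpa using this
      simpa using p1.trans p2
    · rw [dif_neg h]
      have := (List.perm_append_singleton x row).append_right rest.flatten
      simpa using this

end RSAux
namespace RSAux

lemma length_mapTab (f : ℕ → ℕ) (T : Tab) : (mapTab f T).length = T.length :=
  List.length_map _

lemma getD_mapTab (f : ℕ → ℕ) (T : Tab) (i : ℕ) :
    (mapTab f T).getD i [] = (T.getD i []).map f := by
  by_cases h : i < T.length
  · rw [List.getD_eq_getElem _ _ (by simpa [mapTab] using h), List.getD_eq_getElem _ _ h]
    simp [mapTab]
  · rw [List.getD_eq_default _ _ (by simpa [mapTab] using h), List.getD_eq_default _ _ (by omega)]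
    simp

lemma rowInsert_map (f : ℕ → ℕ) : ∀ (T : Tab) (x : ℕ),
    (∀ a ∈ x :: T.flatten, ∀ b ∈ x :: T.flatten, (a < b ↔ f a < f b)) →
    rowInsert (f x) (mapTab f T) = mapTab f (rowInsert x T)
  | [], x, _ => by simp [rowInsert, mapTab]
  | row :: rest, x, h => by
    have hidx : (row.map f).findIdx (fun y => decide (f x < y)) =
        row.findIdx (fun y => decide (x < y)) := by
      rw [findIdx_map']
      exact findIdx_congr (fun y hy => by
        have := h x (by simp) y (by simp [hy])
        simp [this])
    show rowInsert (f x) (List.map f row :: mapTab f rest) = _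
    unfold rowInsert
    by_cases hlt : row.findIdx (fun y => decide (x < y)) < row.length
    · rw [dif_pos (by rw [hidx]; simpa using hlt), dif_pos hlt]
      have hrec : rowInsert (f (row[row.findIdx (fun y => decide (x < y))]'hlt)) (mapTab f rest)
          = mapTab f (rowInsert (row[row.findIdx (fun y => decide (x < y))]'hlt) rest) := by
        apply rowInsert_map f rest
        intro a ha b hb
        have hmem : ∀ c, c ∈ (row[row.findIdx (fun y => decide (x < y))]'hlt) :: rest.flatten →
            c ∈ x :: (row :: rest).flatten := by
          intro c hc
          rcases List.mem_cons.1 hc with rfl | hc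
          · exact List.mem_cons_of_mem _ (by
              simp only [List.flatten_cons, List.mem_append]
              exact Or.inl (List.getElem_mem _))
          · simp [hc]
        exact h a (hmem a ha) b (hmem b hb)
      simp only [List.get_eq_getElem] at hrec ⊢
      simp only [hidx, List.getElem_map]
      rw [hrec]
      simp [mapTab, List.map_set]
    · rw [dif_neg (by rw [hidx]; simpa using hlt), dif_neg hlt]
      simp [mapTab]

lemma place_map (g : ℕ → ℕ) (Q : Tab) (i lab : ℕ) :
    place (mapTab g Q) i (g lab) = mapTab g (place Q i lab) := by
  unfold place
  by_cases h : i < Q.length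
  · rw [if_pos (by simpa [mapTab] using h), if_pos h]
    rw [getD_mapTab]
    simp only [mapTab]
    rw [List.map_set]
    simp
  · rw [if_neg (by simpa [mapTab] using h), if_neg h]
    simp [mapTab]

lemma flatten_set_append_perm (lab : ℕ) : ∀ (Q : Tab) (i : ℕ), i < Q.length →
    ((Q.set i (Q.getD i [] ++ [lab])).flatten).Perm (lab :: Q.flatten)
  | q :: rest, 0, _ => by
    simp only [List.set, List.getD_cons_zero, List.flatten_cons]
    have : ((q ++ [lab]) ++ rest.flatten).Perm ((lab :: q) ++ rest.flatten) :=
      (List.perm_append_singleton lab q).append_right _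
    simpa using this
  | q :: rest, i + 1, h => by
    simp only [List.set, List.getD_cons_succ, List.flatten_cons]
    have ih := (flatten_set_append_perm lab rest i (by simpa using h)).append_left q
    refine ih.trans ?_
    simpa using (List.perm_middle (a := lab) (l₁ := q) (l₂ := rest.flatten)).symm.symm

lemma place_flatten_perm (Q : Tab) (i lab : ℕ) :
    (place Q i lab).flatten.Perm (lab :: Q.flatten) := by
  unfold place
  by_cases h : i < Q.length
  · rw [if_pos h]
    exact flatten_set_append_perm lab Q i h
  · rw [if_neg h]
    simpa using List.perm_append_singleton lab Q.flatten

end RSAux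
namespace RSAux

lemma RSstep_map_val (f : ℕ → ℕ) (P Q : Tab) (x lab : ℕ)
    (h : ∀ a ∈ x :: P.flatten, ∀ b ∈ x :: P.flatten, (a < b ↔ f a < f b)) :
    RSstep (mapTab f P, Q) (f x, lab)
      = (mapTab f (RSstep (P, Q) (x, lab)).1, (RSstep (P, Q) (x, lab)).2) := by
  unfold RSstep
  simp only
  rw [rowInsert_map f P x h]
  congr 2
  rw [length_mapTab]
  apply findIdx_congr
  intro i _
  simp [← List.getD_eq_getElem?_getD, getD_mapTab]

lemma RSstep_map_snd (g : ℕ → ℕ) (P Q : Tab) (x lab : ℕ) :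
    RSstep (P, mapTab g Q) (x, g lab)
      = ((RSstep (P, Q) (x, lab)).1, mapTab g (RSstep (P, Q) (x, lab)).2) := by
  unfold RSstep
  simp only
  rw [place_map]

lemma foldl_RSstep_flatten_fst : ∀ (word : List (ℕ × ℕ)) (P Q : Tab),
    ((word.foldl RSstep (P, Q)).1.flatten).Perm (word.map Prod.fst ++ P.flatten)
  | [], P, Q => by simp
  | (x, l) :: word, P, Q => by
    have ih := foldl_RSstep_flatten_fst word (RSstep (P, Q) (x, l)).1 (RSstep (P, Q) (x, l)).2
    rw [Prod.mk.eta] at ih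
    simp only [List.foldl_cons, List.map_cons]
    refine ih.trans ?_
    have h2 : (RSstep (P, Q) (x, l)).1 = rowInsert x P := rfl
    rw [h2]
    refine ((rowInsert_flatten_perm x P).append_left (word.map Prod.fst)).trans ?_
    exact List.perm_middle

lemma foldl_RSstep_flatten_snd : ∀ (word : List (ℕ × ℕ)) (P Q : Tab),
    ((word.foldl RSstep (P, Q)).2.flatten).Perm (word.map Prod.snd ++ Q.flatten)
  | [], P, Q => by simp
  | (x, l) :: word, P, Q => by
    have ih := foldl_RSstep_flatten_snd word (RSstep (P, Q) (x, l)).1 (RSstep (P, Q) (x, l)).2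
    rw [Prod.mk.eta] at ih
    simp only [List.foldl_cons, List.map_cons]
    refine ih.trans ?_
    refine (List.Perm.append_left (word.map Prod.snd) (place_flatten_perm Q _ l)).trans ?_
    exact List.perm_middle

lemma foldl_RSstep_map_val (f : ℕ → ℕ) : ∀ (word : List (ℕ × ℕ)) (P Q : Tab),
    (∀ a ∈ word.map Prod.fst ++ P.flatten, ∀ b ∈ word.map Prod.fst ++ P.flatten,
      (a < b ↔ f a < f b)) →
    (word.map (fun p => (f p.1, p.2))).foldl RSstep (mapTab f P, Q)
      = (mapTab f ((word.foldl RSstep (P, Q)).1), (word.foldl RSstep (P, Q)).2)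
  | [], P, Q, _ => by simp
  | (x, l) :: word, P, Q, h => by
    simp only [List.map_cons, List.foldl_cons]
    rw [RSstep_map_val f P Q x l (fun a ha b hb => h a (by
        rcases List.mem_cons.1 ha with rfl | ha; · simp
        · simp [ha]) b (by
        rcases List.mem_cons.1 hb with rfl | hb; · simp
        · simp [hb]))]
    have h1 : (RSstep (P, Q) (x, l)).1 = rowInsert x P := rfl
    have hperm : ((RSstep (P, Q) (x, l)).1.flatten).Perm (x :: P.flatten) := by
      rw [h1]; exact rowInsert_flatten_perm x P
    exact foldl_RSstep_map_val f word (RSstep (P, Q) (x, l)).1 (RSstep (P, Q) (x, l)).2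
      (fun a ha b hb => by
        have hsub : ∀ c, c ∈ word.map Prod.fst ++ (RSstep (P, Q) (x, l)).1.flatten →
            c ∈ ((x, l) :: word).map Prod.fst ++ P.flatten := by
          intro c hc
          rcases List.mem_append.1 hc with hc | hc
          · simp [hc]
          · rcases List.mem_cons.1 (hperm.mem_iff.1 hc) with rfl | hc
            · simp
            · simp [hc]
        exact h a (hsub a ha) b (hsub b hb))

lemma foldl_RSstep_map_snd (g : ℕ → ℕ) : ∀ (word : List (ℕ × ℕ)) (P Q : Tab),
    (word.map (fun p => (p.1, g p.2))).foldl RSstep (P, mapTab g Q)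
      = ((word.foldl RSstep (P, Q)).1, mapTab g ((word.foldl RSstep (P, Q)).2))
  | [], P, Q => by simp
  | (x, l) :: word, P, Q => by
    simp only [List.map_cons, List.foldl_cons]
    rw [RSstep_map_snd g P Q x l]
    exact foldl_RSstep_map_snd g word _ _

lemma RSword_map_val (f : ℕ → ℕ) (word : List (ℕ × ℕ))
    (h : ∀ a ∈ word.map Prod.fst, ∀ b ∈ word.map Prod.fst, (a < b ↔ f a < f b)) :
    RSword (word.map (fun p => (f p.1, p.2)))
      = (mapTab f (RSword word).1, (RSword word).2) := by
  unfold RSword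
  have : mapTab f [] = [] := rfl
  rw [← this]
  exact foldl_RSstep_map_val f word [] [] (by simpa using h)

lemma RSword_map_snd (g : ℕ → ℕ) (word : List (ℕ × ℕ)) :
    RSword (word.map (fun p => (p.1, g p.2)))
      = ((RSword word).1, mapTab g (RSword word).2) := by
  unfold RSword
  have : mapTab g [] = [] := rfl
  rw [← this]
  exact foldl_RSstep_map_snd g word [] []

lemma RSword_fst_flatten_perm (word : List (ℕ × ℕ)) :
    ((RSword word).1.flatten).Perm (word.map Prod.fst) := by
  simpa [RSword] using foldl_RSstep_flatten_fst word [] []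

lemma RSword_snd_flatten_perm (word : List (ℕ × ℕ)) :
    ((RSword word).2.flatten).Perm (word.map Prod.snd) := by
  simpa [RSword] using foldl_RSstep_flatten_snd word [] []

end RSAux
namespace RSAux

lemma shape_mapTab (f : ℕ → ℕ) (T : Tab) : shape (mapTab f T) = shape T := by
  simp [shape, mapTab, List.map_map, Function.comp_def]

lemma sizeTab_mapTab (f : ℕ → ℕ) (T : Tab) : sizeTab (mapTab f T) = sizeTab T := by
  unfold sizeTab mapTab
  simp [Function.comp_def]

lemma eTab_mapTab (f : ℕ → ℕ) (T : Tab) : eTab (mapTab f T) = eTab T := by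
  unfold eTab
  rw [length_mapTab]
  exact Finset.sum_congr rfl (fun i _ => by rw [getD_mapTab]; simp)

lemma labels_mapTab (f : ℕ → ℕ) (T : Tab) : labels (mapTab f T) = (labels T).image f := by
  unfold labels
  ext a
  simp only [Finset.mem_image, List.mem_toFinset, mapTab, List.mem_flatten, List.mem_map]
  constructor
  · rintro ⟨l', ⟨l, hl, rfl⟩, hal⟩
    obtain ⟨b, hb, rfl⟩ := List.mem_map.1 hal
    exact ⟨b, ⟨l, hl, hb⟩, rfl⟩
  · rintro ⟨b, ⟨l, hl, hb⟩, rfl⟩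
    exact ⟨l.map f, ⟨l, hl, rfl⟩, List.mem_map_of_mem hb⟩

lemma rowOf_mapTab (f : ℕ → ℕ) (hf : Function.Injective f) (T : Tab) (x : ℕ) :
    rowOf (mapTab f T) (f x) = rowOf T x := by
  unfold rowOf mapTab
  rw [findIdx_map']
  apply findIdx_congr
  intro row _
  have h2 : (f x ∈ row.map f) ↔ (x ∈ row) := List.mem_map_of_injective hf
  simp [h2]

/-- The involution of `ℕ` interchanging `j` and `j + 1`. -/
def fsw (j : ℕ) : ℕ → ℕ := fun x => if x = j then j + 1 else if x = j + 1 then j else x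

lemma fsw_fsw (j x : ℕ) : fsw j (fsw j x) = x := by
  unfold fsw; split_ifs <;> omega

lemma fsw_inj (j : ℕ) : Function.Injective (fsw j) :=
  Function.LeftInverse.injective (g := fsw j) (fsw_fsw j)

lemma fsw_apply_j (j : ℕ) : fsw j j = j + 1 := by simp [fsw]

lemma fsw_apply_j1 (j : ℕ) : fsw j (j + 1) = j := by simp [fsw]

lemma fsw_apply_other (j x : ℕ) (h1 : x ≠ j) (h2 : x ≠ j + 1) : fsw j x = x := by
  simp [fsw, h1, h2]

lemma card_filter_image (f g : ℕ → ℕ) (hf : Function.Injective f) (hg : Function.Injective g)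
    (A B : Finset ℕ) (p q : ℕ × ℕ → Prop) [DecidablePred p] [DecidablePred q]
    (h : ∀ x ∈ A, ∀ y ∈ B, (q (f x, g y) ↔ p (x, y))) :
    (((A.image f) ×ˢ (B.image g)).filter q).card = ((A ×ˢ B).filter p).card := by
  have himg : ((A.image f) ×ˢ (B.image g)).filter q
      = (((A ×ˢ B).filter p).image (fun z => (f z.1, g z.2))) := by
    ext z
    simp only [Finset.mem_filter, Finset.mem_product, Finset.mem_image, Finset.mem_product]
    constructor
    · rintro ⟨⟨h1, h2⟩, hq⟩
      obtain ⟨x, hx, hfx⟩ := h1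
      obtain ⟨y, hy, hgy⟩ := h2
      refine ⟨(x, y), ⟨⟨hx, hy⟩, ?_⟩, ?_⟩
      · apply (h x hx y hy).1
        have : ((f x, g y) : ℕ × ℕ) = z := Prod.ext hfx hgy
        rw [this]; exact hq
      · exact Prod.ext hfx hgy
    · rintro ⟨⟨x, y⟩, ⟨⟨hx, hy⟩, hp⟩, rfl⟩
      exact ⟨⟨⟨x, hx, rfl⟩, ⟨y, hy, rfl⟩⟩, (h x hx y hy).2 hp⟩
  rw [himg]
  apply Finset.card_image_of_injOn
  intro z _ z' _ hzz
  simp only [Prod.mk.injEq] at hzz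
  exact Prod.ext (hf hzz.1) (hg hzz.2)

lemma card_filter_succ (s : Finset (ℕ × ℕ)) (p q : ℕ × ℕ → Prop)
    [DecidablePred p] [DecidablePred q] (z0 : ℕ × ℕ) (hz0 : z0 ∈ s) (hq : q z0) (hp : ¬ p z0)
    (h : ∀ z ∈ s, z ≠ z0 → (q z ↔ p z)) :
    (s.filter q).card = (s.filter p).card + 1 := by
  have : s.filter q = insert z0 (s.filter p) := by
    ext z
    simp only [Finset.mem_filter, Finset.mem_insert]
    constructor
    · rintro ⟨hzs, hqz⟩
      by_cases hz : z = z0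
      · exact Or.inl hz
      · exact Or.inr ⟨hzs, (h z hzs hz).1 hqz⟩
    · rintro (rfl | ⟨hzs, hpz⟩)
      · exact ⟨hz0, hq⟩
      · by_cases hz : z = z0
        · subst hz; exact absurd hpz hp
        · exact ⟨hzs, (h z hzs hz).2 hpz⟩
  rw [this, Finset.card_insert_of_notMem (by simp [hp])]

end RSAux
namespace RSAux

lemma fsw_lt_iff (j x y : ℕ) (h1 : ¬(x = j ∧ y = j + 1)) (h2 : ¬(x = j + 1 ∧ y = j)) :
    (fsw j x < fsw j y ↔ x < y) := by
  unfold fsw; split_ifs <;> omega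

lemma invTab_mapTab (j : ℕ) (T : Tab) (hT : j ∉ labels T ∨ j + 1 ∉ labels T) :
    invTab (mapTab (fsw j) T) = invTab T := by
  unfold invTab
  rw [labels_mapTab]
  apply card_filter_image (fsw j) (fsw j) (fsw_inj j) (fsw_inj j)
  intro x hx y hy
  rw [rowOf_mapTab _ (fsw_inj j), rowOf_mapTab _ (fsw_inj j)]
  have horder : fsw j x < fsw j y ↔ x < y := by
    apply fsw_lt_iff <;> rintro ⟨rfl, rfl⟩ <;> rcases hT with hT | hT <;> exact hT ‹_›
  rw [horder]

lemma crossInv_mapTab (j : ℕ) (S T : Tab)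
    (h1 : ¬(j ∈ labels S ∧ j + 1 ∈ labels T)) (h2 : ¬(j + 1 ∈ labels S ∧ j ∈ labels T)) :
    crossInv (mapTab (fsw j) S) (mapTab (fsw j) T) = crossInv S T := by
  unfold crossInv
  rw [labels_mapTab, labels_mapTab]
  apply card_filter_image (fsw j) (fsw j) (fsw_inj j) (fsw_inj j)
  intro x hx y hy
  apply fsw_lt_iff <;> rintro ⟨rfl, rfl⟩
  · exact h2 ⟨hx, hy⟩
  · exact h1 ⟨hx, hy⟩

lemma crossInv_mapTab_plus (j : ℕ) (S T : Tab) (hjS : j ∈ labels S)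
    (hj1T : j + 1 ∈ labels T) (hj1S : j + 1 ∉ labels S) (hjT : j ∉ labels T) :
    crossInv (mapTab (fsw j) S) (mapTab (fsw j) T) = crossInv S T + 1 := by
  unfold crossInv
  rw [labels_mapTab, labels_mapTab]
  rw [card_filter_image (fsw j) (fsw j) (fsw_inj j) (fsw_inj j) (labels S) (labels T)
    (fun z => fsw j z.2 < fsw j z.1) (fun z => z.2 < z.1) (fun x _ y _ => Iff.rfl)]
  apply card_filter_succ _ _ _ (j, j + 1)
  · simp [Finset.mem_product, hjS, hj1T]
  · simp [fsw_apply_j, fsw_apply_j1]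
  · simp
  · rintro ⟨x, y⟩ hz hne
    simp only [Finset.mem_product] at hz
    refine fsw_lt_iff j y x ?_ ?_ <;> rintro ⟨rfl, rfl⟩
    · exact hj1S hz.1
    · exact hne rfl

lemma crossInv_mapTab_minus (j : ℕ) (S T : Tab) (hj1S : j + 1 ∈ labels S)
    (hjT : j ∈ labels T) (hjS : j ∉ labels S) (hj1T : j + 1 ∉ labels T) :
    crossInv S T = crossInv (mapTab (fsw j) S) (mapTab (fsw j) T) + 1 := by
  unfold crossInv
  rw [labels_mapTab, labels_mapTab]
  rw [card_filter_image (fsw j) (fsw j) (fsw_inj j) (fsw_inj j) (labels S) (labels T)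
    (fun z => fsw j z.2 < fsw j z.1) (fun z => z.2 < z.1) (fun x _ y _ => Iff.rfl)]
  apply card_filter_succ _ _ _ (j + 1, j)
  · simp [Finset.mem_product, hj1S, hjT]
  · simp
  · simp [fsw_apply_j, fsw_apply_j1]
  · rintro ⟨x, y⟩ hz hne
    simp only [Finset.mem_product] at hz
    refine (fsw_lt_iff j y x ?_ ?_).symm <;> rintro ⟨rfl, rfl⟩
    · exact hne rfl
    · exact hj1T hz.2

lemma invMulti_fsw_odd {r : ℕ} (T : Fin r → Tab) (j : ℕ) (k1 k2 : Fin r) (hk : k1 ≠ k2)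
    (hj1 : j ∈ labels (T k1)) (hj2 : j + 1 ∈ labels (T k2))
    (hmem : ∀ k : Fin r, ∀ x ∈ labels (T k), (x = j → k = k1) ∧ (x = j + 1 → k = k2)) :
    Odd (invMulti (fun k => mapTab (fsw j) (T k)) + invMulti T) := by
  have hjnot : ∀ k : Fin r, k ≠ k1 → j ∉ labels (T k) :=
    fun k hne hmem' => hne ((hmem k j hmem').1 rfl)
  have hj1not : ∀ k : Fin r, k ≠ k2 → j + 1 ∉ labels (T k) :=
    fun k hne hmem' => hne ((hmem k (j + 1) hmem').2 rfl)
  have hsum1 : ∑ k, invTab (mapTab (fsw j) (T k)) = ∑ k, invTab (T k) := by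
    refine Finset.sum_congr rfl (fun k _ => ?_)
    apply invTab_mapTab
    by_cases hk1 : k = k1
    · subst hk1; exact Or.inr (hj1not k hk)
    · exact Or.inl (hjnot k hk1)
  set F' : Fin r × Fin r → ℕ := fun z =>
    if z.1 < z.2 then crossInv (mapTab (fsw j) (T z.1)) (mapTab (fsw j) (T z.2)) else 0 with hF'
  set F : Fin r × Fin r → ℕ := fun z =>
    if z.1 < z.2 then crossInv (T z.1) (T z.2) else 0 with hF
  have hgen : ∀ z : Fin r × Fin r, z ≠ (k1, k2) → z ≠ (k2, k1) → F' z = F z := by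
    rintro ⟨k, l⟩ hne1 hne2
    by_cases hlt : k < l
    · simp only [hF', hF, if_pos hlt]
      apply crossInv_mapTab
      · rintro ⟨hjk, hj1l⟩
        exact hne1 (by rw [(hmem k j hjk).1 rfl, (hmem l (j + 1) hj1l).2 rfl])
      · rintro ⟨hj1k, hjl⟩
        exact hne2 (by rw [(hmem k (j + 1) hj1k).2 rfl, (hmem l j hjl).1 rfl])
    · simp only [hF', hF, if_neg hlt]
  have hIM' : invMulti (fun k => mapTab (fsw j) (T k)) = (∑ k, invTab (T k)) + ∑ z : Fin r × Fin r, F' z := by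
    unfold invMulti
    rw [hsum1, Fintype.sum_prod_type]
  have hIM : invMulti T = (∑ k, invTab (T k)) + ∑ z : Fin r × Fin r, F z := by
    unfold invMulti
    rw [Fintype.sum_prod_type]
  have hmemS : j + 1 ∉ labels (T k1) := hj1not k1 hk
  have hmemT : j ∉ labels (T k2) := hjnot k2 (Ne.symm hk)
  rcases lt_or_gt_of_ne hk with hlt | hlt
  · -- k1 < k2 : flip at (k1, k2), +1
    have hz0 : F' (k1, k2) = F (k1, k2) + 1 := by
      simp only [hF', hF, if_pos hlt]
      exact crossInv_mapTab_plus j (T k1) (T k2) hj1 hj2 hmemS hmemT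
    have hne' : ∀ z ∈ Finset.univ \ {((k1, k2) : Fin r × Fin r)}, F' z = F z := by
      intro z hz
      simp only [Finset.mem_sdiff, Finset.mem_singleton] at hz
      by_cases hz2 : z = (k2, k1)
      · subst hz2
        have hneg : ¬ (k2 < k1) := fun h => absurd (h.trans hlt) (lt_irrefl _)
        simp only [hF', hF, if_neg hneg]
      · exact hgen z hz.2 hz2
    have hsplit' := Finset.sum_eq_sum_sdiff_singleton_add
      (Finset.mem_univ ((k1, k2) : Fin r × Fin r)) F'
    have hsplit := Finset.sum_eq_sum_sdiff_singleton_add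
      (Finset.mem_univ ((k1, k2) : Fin r × Fin r)) F
    have hdiff : ∑ z ∈ Finset.univ \ {((k1, k2) : Fin r × Fin r)}, F' z
        = ∑ z ∈ Finset.univ \ {((k1, k2) : Fin r × Fin r)}, F z :=
      Finset.sum_congr rfl hne'
    have htot : ∑ z : Fin r × Fin r, F' z = (∑ z : Fin r × Fin r, F z) + 1 := by
      rw [hsplit', hsplit, hdiff, hz0]
      omega
    refine ⟨invMulti T, ?_⟩
    rw [hIM', hIM, htot]
    omega
  · -- k2 < k1 : flip at (k2, k1), -1
    have hz0 : F (k2, k1) = F' (k2, k1) + 1 := by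
      simp only [hF', hF, if_pos hlt]
      exact crossInv_mapTab_minus j (T k2) (T k1) hj2 hj1 hmemT hmemS
    have hne' : ∀ z ∈ Finset.univ \ {((k2, k1) : Fin r × Fin r)}, F' z = F z := by
      intro z hz
      simp only [Finset.mem_sdiff, Finset.mem_singleton] at hz
      by_cases hz2 : z = (k1, k2)
      · subst hz2
        have hneg : ¬ (k1 < k2) := fun h => absurd (h.trans hlt) (lt_irrefl _)
        simp only [hF', hF, if_neg hneg]
      · exact hgen z hz2 hz.2
    have hsplit' := Finset.sum_eq_sum_sdiff_singleton_add
      (Finset.mem_univ ((k2, k1) : Fin r × Fin r)) F'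
    have hsplit := Finset.sum_eq_sum_sdiff_singleton_add
      (Finset.mem_univ ((k2, k1) : Fin r × Fin r)) F
    have hdiff : ∑ z ∈ Finset.univ \ {((k2, k1) : Fin r × Fin r)}, F' z
        = ∑ z ∈ Finset.univ \ {((k2, k1) : Fin r × Fin r)}, F z :=
      Finset.sum_congr rfl hne'
    have htot : ∑ z : Fin r × Fin r, F z = (∑ z : Fin r × Fin r, F' z) + 1 := by
      rw [hsplit', hsplit, hdiff, hz0]
      omega
    refine ⟨invMulti (fun k => mapTab (fsw j) (T k)), ?_⟩
    rw [hIM', hIM, htot]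
    omega

end RSAux
namespace RSAux

lemma signMulti_neg {r' : ℕ} (T T' : Fin r' → Tab) (h : Odd (invMulti T' + invMulti T)) :
    signMulti T' = - signMulti T := by
  unfold signMulti
  have h2 : ((-1 : ℂ)) ^ (invMulti T' + invMulti T) = -1 := Odd.neg_one_pow h
  rw [pow_add] at h2
  have hsq : ((-1 : ℂ)) ^ invMulti T * ((-1 : ℂ)) ^ invMulti T = 1 := by
    rw [← pow_add]
    exact Even.neg_one_pow ⟨invMulti T, rfl⟩
  calc ((-1 : ℂ)) ^ invMulti T'
      = ((-1 : ℂ)) ^ invMulti T' * (((-1 : ℂ)) ^ invMulti T * ((-1 : ℂ)) ^ invMulti T) := by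
        rw [hsq, mul_one]
    _ = (((-1 : ℂ)) ^ invMulti T' * ((-1 : ℂ)) ^ invMulti T) * ((-1 : ℂ)) ^ invMulti T := by
        ring
    _ = - ((-1 : ℂ)) ^ invMulti T := by rw [h2]; ring

section GWfacts

variable {r n : ℕ}

lemma Lop_a (u : GW r n) (j : ℕ) (h1 : 1 ≤ j) (h2 : j + 1 ≤ n) :
    (Lop u j h1 h2).a = u.a := by
  funext i
  show (sEl r n j h1 h2).a (u.σ i) + u.a i = u.a i
  show (0 : ZMod r) + u.a i = u.a i
  rw [zero_add]

lemma Lop_sigma (u : GW r n) (j : ℕ) (h1 : 1 ≤ j) (h2 : j + 1 ≤ n) (i : Fin n) :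
    (Lop u j h1 h2).σ i = Equiv.swap (⟨j - 1, by omega⟩ : Fin n) ⟨j, by omega⟩ (u.σ i) := rfl

lemma Rop_a (u : GW r n) (j : ℕ) (h1 : 1 ≤ j) (h2 : j + 1 ≤ n) (i : Fin n) :
    (Rop u j h1 h2).a i = u.a (Equiv.swap (⟨j - 1, by omega⟩ : Fin n) ⟨j, by omega⟩ i) := by
  show u.a _ + (0 : ZMod r) = _
  rw [add_zero]
  rfl

lemma Rop_sigma (u : GW r n) (j : ℕ) (h1 : 1 ≤ j) (h2 : j + 1 ≤ n) (i : Fin n) :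
    (Rop u j h1 h2).σ i = u.σ (Equiv.swap (⟨j - 1, by omega⟩ : Fin n) ⟨j, by omega⟩ i) := rfl

lemma swap_val_succ (j : ℕ) (h1 : 1 ≤ j) (h2 : j + 1 ≤ n) (m : Fin n) :
    ((Equiv.swap (⟨j - 1, by omega⟩ : Fin n) ⟨j, by omega⟩ m : Fin n) : ℕ) + 1
      = fsw j ((m : ℕ) + 1) := by
  rcases eq_or_ne m ⟨j - 1, by omega⟩ with rfl | hm0
  · rw [Equiv.swap_apply_left]
    show j + 1 = fsw j (j - 1 + 1)
    rw [show j - 1 + 1 = j by omega, fsw_apply_j]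
  · rcases eq_or_ne m ⟨j, by omega⟩ with rfl | hm1
    · rw [Equiv.swap_apply_right]
      show j - 1 + 1 = fsw j (j + 1)
      rw [fsw_apply_j1]; omega
    · rw [Equiv.swap_apply_of_ne_of_ne hm0 hm1]
      have hv0 : (m : ℕ) ≠ j - 1 := fun h => hm0 (Fin.ext h)
      have hv1 : (m : ℕ) ≠ j := fun h => hm1 (Fin.ext h)
      rw [fsw_apply_other j _ (by omega) (by omega)]

lemma swap_lt_iff (j : ℕ) (h1 : 1 ≤ j) (h2 : j + 1 ≤ n) (a b : Fin n)
    (hne1 : ¬(a = (⟨j - 1, by omega⟩ : Fin n) ∧ b = (⟨j, by omega⟩ : Fin n)))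
    (hne2 : ¬(a = (⟨j, by omega⟩ : Fin n) ∧ b = (⟨j - 1, by omega⟩ : Fin n))) :
    (Equiv.swap (⟨j - 1, by omega⟩ : Fin n) ⟨j, by omega⟩ a
      < Equiv.swap (⟨j - 1, by omega⟩ : Fin n) ⟨j, by omega⟩ b ↔ a < b) := by
  have e1 := swap_val_succ j h1 h2 a
  have e2 := swap_val_succ j h1 h2 b
  have hf : fsw j ((a : ℕ) + 1) < fsw j ((b : ℕ) + 1) ↔ (a : ℕ) + 1 < (b : ℕ) + 1 := by
    apply fsw_lt_iff
    · rintro ⟨ha, hb⟩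
      exact hne1 ⟨Fin.ext (show (a : ℕ) = j - 1 by omega), Fin.ext (show (b : ℕ) = j by omega)⟩
    · rintro ⟨ha, hb⟩
      exact hne2 ⟨Fin.ext (show (a : ℕ) = j by omega), Fin.ext (show (b : ℕ) = j - 1 by omega)⟩
  constructor
  · intro h
    have : ((Equiv.swap (⟨j - 1, by omega⟩ : Fin n) ⟨j, by omega⟩ a : Fin n) : ℕ)
        < ((Equiv.swap (⟨j - 1, by omega⟩ : Fin n) ⟨j, by omega⟩ b : Fin n) : ℕ) := h
    have := hf.1 (by omega)
    exact Fin.lt_def.2 (by omega)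
  · intro h
    have hab : (a : ℕ) < (b : ℕ) := h
    have := hf.2 (by omega)
    exact Fin.lt_def.2 (by omega)

end GWfacts

end RSAux
namespace RSAux

section Words

variable {r n : ℕ}

lemma labelIdx_Lop (u : GW r n) (j : ℕ) (h1 : 1 ≤ j) (h2 : j + 1 ≤ n) (k : ℕ) :
    labelIdx (Lop u j h1 h2) k = labelIdx u k := by
  unfold labelIdx
  apply List.filter_congr
  intro i _
  rw [Lop_a]

lemma wordPairs_Lop (u : GW r n) (j : ℕ) (h1 : 1 ≤ j) (h2 : j + 1 ≤ n) (k : ℕ) :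
    wordPairs (Lop u j h1 h2) k = (wordPairs u k).map (fun p => (fsw j p.1, p.2)) := by
  unfold wordPairs
  rw [labelIdx_Lop, List.map_map]
  apply List.map_congr_left
  intro i _
  show (((Lop u j h1 h2).σ i : ℕ) + 1, (i : ℕ) + 1) = (fsw j ((u.σ i : ℕ) + 1), (i : ℕ) + 1)
  have hσ : (((Lop u j h1 h2).σ i : ℕ) + 1) = fsw j ((u.σ i : ℕ) + 1) := by
    rw [Lop_sigma u j h1 h2 i]
    exact swap_val_succ j h1 h2 (u.σ i)
  rw [hσ]

lemma labelIdx_Rop [NeZero r] (u : GW r n) (j : ℕ) (h1 : 1 ≤ j) (h2 : j + 1 ≤ n)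
    (ha : RightAdm u j h1 h2) (k : ℕ) :
    labelIdx (Rop u j h1 h2) k
      = (labelIdx u k).map (Equiv.swap (⟨j - 1, by omega⟩ : Fin n) ⟨j, by omega⟩) := by
  have hstep : labelIdx (Rop u j h1 h2) k = (List.finRange n).filter
      (fun i => decide ((u.a (Equiv.swap (⟨j - 1, by omega⟩ : Fin n) ⟨j, by omega⟩ i)).val = k)) := by
    unfold labelIdx
    apply List.filter_congr
    intro i _
    rw [Rop_a]
  rw [hstep]
  have hmem2 : ∀ i : Fin n, i ∈ (labelIdx u k).map
        (Equiv.swap (⟨j - 1, by omega⟩ : Fin n) ⟨j, by omega⟩) ↔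
      (u.a (Equiv.swap (⟨j - 1, by omega⟩ : Fin n) ⟨j, by omega⟩ i)).val = k := by
    intro i
    simp only [List.mem_map, labelIdx, List.mem_filter, List.mem_finRange, true_and]
    constructor
    · rintro ⟨i0, hi0, rfl⟩
      rw [show Equiv.swap (⟨j - 1, by omega⟩ : Fin n) ⟨j, by omega⟩
          (Equiv.swap (⟨j - 1, by omega⟩ : Fin n) ⟨j, by omega⟩ i0) = i0 by simp]
      simpa using hi0
    · intro h
      exact ⟨Equiv.swap (⟨j - 1, by omega⟩ : Fin n) ⟨j, by omega⟩ i, by simpa using h, by simp⟩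
  have hnd1 : ((List.finRange n).filter
      (fun i => decide ((u.a (Equiv.swap (⟨j - 1, by omega⟩ : Fin n) ⟨j, by omega⟩ i)).val = k))).Nodup :=
    (List.nodup_finRange n).filter _
  have hnd2 : ((labelIdx u k).map
      (Equiv.swap (⟨j - 1, by omega⟩ : Fin n) ⟨j, by omega⟩)).Nodup :=
    (((List.nodup_finRange n).filter _)).map (Equiv.injective _)
  have hsort1 : ((List.finRange n).filter
      (fun i => decide ((u.a (Equiv.swap (⟨j - 1, by omega⟩ : Fin n) ⟨j, by omega⟩ i)).val
        = k))).Pairwise (· < ·) :=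
    List.Pairwise.sublist List.filter_sublist (List.pairwise_lt_finRange n)
  have hsort2 : ((labelIdx u k).map
      (Equiv.swap (⟨j - 1, by omega⟩ : Fin n) ⟨j, by omega⟩)).Pairwise (· < ·) := by
    rw [List.pairwise_map]
    have hp : (labelIdx u k).Pairwise (· < ·) :=
      List.Pairwise.sublist List.filter_sublist (List.pairwise_lt_finRange n)
    refine hp.imp_of_mem ?_
    intro a b hamem hbmem hab
    have hak : (u.a a).val = k := by simpa [labelIdx, List.mem_filter] using hamem
    have hbk : (u.a b).val = k := by simpa [labelIdx, List.mem_filter] using hbmem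
    have hEq : u.a a = u.a b := ZMod.val_injective r (by rw [hak, hbk])
    refine (swap_lt_iff j h1 h2 a b ?_ ?_).2 hab
    · rintro ⟨rfl, rfl⟩
      exact ha hEq
    · rintro ⟨rfl, rfl⟩
      exact ha hEq.symm
  haveI : IsAntisymm (Fin n) (· < ·) := ⟨fun a b ha' hb' => absurd hb' (asymm ha')⟩
  refine List.Perm.eq_of_pairwise' hsort1 hsort2 ?_
  refine List.perm_of_nodup_nodup_toFinset_eq hnd1 hnd2 ?_
  ext i
  simp only [List.mem_toFinset, List.mem_filter, List.mem_finRange, true_and, decide_eq_true_eq]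
  rw [hmem2 i]

lemma wordPairs_Rop [NeZero r] (u : GW r n) (j : ℕ) (h1 : 1 ≤ j) (h2 : j + 1 ≤ n)
    (ha : RightAdm u j h1 h2) (k : ℕ) :
    wordPairs (Rop u j h1 h2) k = (wordPairs u k).map (fun p => (p.1, fsw j p.2)) := by
  unfold wordPairs
  rw [labelIdx_Rop u j h1 h2 ha k, List.map_map, List.map_map]
  apply List.map_congr_left
  intro i _
  show (((Rop u j h1 h2).σ (Equiv.swap (⟨j - 1, by omega⟩ : Fin n) ⟨j, by omega⟩ i) : ℕ) + 1,
      ((Equiv.swap (⟨j - 1, by omega⟩ : Fin n) ⟨j, by omega⟩ i : Fin n) : ℕ) + 1)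
    = ((u.σ i : ℕ) + 1, fsw j ((i : ℕ) + 1))
  have c1 : (Rop u j h1 h2).σ (Equiv.swap (⟨j - 1, by omega⟩ : Fin n) ⟨j, by omega⟩ i)
      = u.σ i := by
    rw [Rop_sigma]
    congr 1
    simp
  have c2 : ((Equiv.swap (⟨j - 1, by omega⟩ : Fin n) ⟨j, by omega⟩ i : Fin n) : ℕ) + 1
      = fsw j ((i : ℕ) + 1) := swap_val_succ j h1 h2 i
  rw [c1, c2]

lemma mem_fst_wordPairs (w : GW r n) (k : ℕ) (x : ℕ) :
    x ∈ (wordPairs w k).map Prod.fst ↔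
      ∃ i : Fin n, (w.a i).val = k ∧ (w.σ i : ℕ) + 1 = x := by
  simp only [wordPairs, labelIdx, List.map_map, List.mem_map, List.mem_filter,
    List.mem_finRange, true_and, Function.comp_def, decide_eq_true_eq]

lemma mem_snd_wordPairs (w : GW r n) (k : ℕ) (x : ℕ) :
    x ∈ (wordPairs w k).map Prod.snd ↔
      ∃ i : Fin n, (w.a i).val = k ∧ (i : ℕ) + 1 = x := by
  simp only [wordPairs, labelIdx, List.map_map, List.mem_map, List.mem_filter,
    List.mem_finRange, true_and, Function.comp_def, decide_eq_true_eq]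

lemma labels_Ptab (w : GW r n) (k : Fin r) :
    labels (Ptab w k) = ((wordPairs w (k : ℕ)).map Prod.fst).toFinset := by
  unfold Ptab labels
  ext a
  simp only [List.mem_toFinset]
  exact (RSword_fst_flatten_perm _).mem_iff

lemma labels_Qtab (w : GW r n) (k : Fin r) :
    labels (Qtab w k) = ((wordPairs w (k : ℕ)).map Prod.snd).toFinset := by
  unfold Qtab labels
  ext a
  simp only [List.mem_toFinset]
  exact (RSword_snd_flatten_perm _).mem_iff

end Words

end RSAux
namespace RSAux

section Step

variable {r n : ℕ}

lemma compat_Lop [NeZero r] (u : GW r n) (j : ℕ) (h1 : 1 ≤ j) (h2 : j + 1 ≤ n)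
    (ha : LeftAdm u j h1 h2) (k : ℕ) :
    ∀ a ∈ (wordPairs u k).map Prod.fst, ∀ b ∈ (wordPairs u k).map Prod.fst,
      (a < b ↔ fsw j a < fsw j b) := by
  intro a hamem b hbmem
  rw [mem_fst_wordPairs] at hamem hbmem
  obtain ⟨ia, hka, hva⟩ := hamem
  obtain ⟨ib, hkb, hvb⟩ := hbmem
  have hinj : ∀ (ix iy : Fin n), (u.a ix).val = k → (u.a iy).val = k →
      (u.σ ix : ℕ) + 1 = j → (u.σ iy : ℕ) + 1 = j + 1 → False := by
    intro ix iy hx hy hjx hjy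
    have hxx : u.σ ix = ⟨j - 1, by omega⟩ := Fin.ext (show ((u.σ ix : Fin n) : ℕ) = j - 1 by omega)
    have hyy : u.σ iy = ⟨j, by omega⟩ := Fin.ext (show ((u.σ iy : Fin n) : ℕ) = j by omega)
    have hix : u.σ⁻¹ (⟨j - 1, by omega⟩ : Fin n) = ix := by rw [← hxx]; simp
    have hiy : u.σ⁻¹ (⟨j, by omega⟩ : Fin n) = iy := by rw [← hyy]; simp
    apply ha
    rw [hix, hiy]
    exact ZMod.val_injective r (by rw [hx, hy])
  refine (fsw_lt_iff j a b ?_ ?_).symm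
  · rintro ⟨rfl, rfl⟩
    exact hinj ia ib hka hkb hva hvb
  · rintro ⟨rfl, rfl⟩
    exact hinj ib ia hkb hka hvb hva

lemma Ptab_Lop [NeZero r] (u : GW r n) (j : ℕ) (h1 : 1 ≤ j) (h2 : j + 1 ≤ n)
    (ha : LeftAdm u j h1 h2) (k : Fin r) :
    Ptab (Lop u j h1 h2) k = mapTab (fsw j) (Ptab u k) := by
  show (RSword (wordPairs (Lop u j h1 h2) (k : ℕ))).1 = _
  rw [wordPairs_Lop u j h1 h2 (k : ℕ),
    RSword_map_val (fsw j) _ (compat_Lop u j h1 h2 ha (k : ℕ))]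
  rfl

lemma Qtab_Lop [NeZero r] (u : GW r n) (j : ℕ) (h1 : 1 ≤ j) (h2 : j + 1 ≤ n)
    (ha : LeftAdm u j h1 h2) (k : Fin r) :
    Qtab (Lop u j h1 h2) k = Qtab u k := by
  show (RSword (wordPairs (Lop u j h1 h2) (k : ℕ))).2 = _
  rw [wordPairs_Lop u j h1 h2 (k : ℕ),
    RSword_map_val (fsw j) _ (compat_Lop u j h1 h2 ha (k : ℕ))]
  rfl

lemma Ptab_Rop [NeZero r] (u : GW r n) (j : ℕ) (h1 : 1 ≤ j) (h2 : j + 1 ≤ n)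
    (ha : RightAdm u j h1 h2) (k : Fin r) :
    Ptab (Rop u j h1 h2) k = Ptab u k := by
  show (RSword (wordPairs (Rop u j h1 h2) (k : ℕ))).1 = _
  rw [wordPairs_Rop u j h1 h2 ha (k : ℕ), RSword_map_snd (fsw j)]
  rfl

lemma Qtab_Rop [NeZero r] (u : GW r n) (j : ℕ) (h1 : 1 ≤ j) (h2 : j + 1 ≤ n)
    (ha : RightAdm u j h1 h2) (k : Fin r) :
    Qtab (Rop u j h1 h2) k = mapTab (fsw j) (Qtab u k) := by
  show (RSword (wordPairs (Rop u j h1 h2) (k : ℕ))).2 = _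
  rw [wordPairs_Rop u j h1 h2 ha (k : ℕ), RSword_map_snd (fsw j)]
  rfl

lemma piStat_neg_of (i : ℕ) (u v : GW r n)
    (hE : eMulti (Ptab v) = eMulti (Ptab u))
    (hSP : twoSpin (Ptab v) = twoSpin (Ptab u))
    (hSQ : twoSpin (Qtab v) = twoSpin (Qtab u))
    (hsgn : signMulti (Ptab v) * signMulti (Qtab v)
      = - (signMulti (Ptab u) * signMulti (Qtab u))) :
    piStat r n i v = - piStat r n i u := by
  unfold piStat spin
  rw [hE, hSP, hSQ]
  linear_combination ((-1 : ℂ)) ^ eMulti (Ptab u) *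
    (zeta r ^ i) ^ ((((twoSpin (Ptab u) : ℚ) / 2 + (twoSpin (Qtab u) : ℚ) / 2 : ℚ) : ℂ)) * hsgn

lemma step_Lop_pi [NeZero r] (u : GW r n) (j : ℕ) (h1 : 1 ≤ j) (h2 : j + 1 ≤ n)
    (ha : LeftAdm u j h1 h2) (i : ℕ) :
    piStat r n i (Lop u j h1 h2) = - piStat r n i u := by
  have hP := Ptab_Lop u j h1 h2 ha
  have hQ := Qtab_Lop u j h1 h2 ha
  have hE : eMulti (Ptab (Lop u j h1 h2)) = eMulti (Ptab u) :=
    Finset.sum_congr rfl fun k _ => by rw [hP k, eTab_mapTab]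
  have hSP : twoSpin (Ptab (Lop u j h1 h2)) = twoSpin (Ptab u) :=
    Finset.sum_congr rfl fun k _ => by rw [hP k, sizeTab_mapTab]
  have hSQ : twoSpin (Qtab (Lop u j h1 h2)) = twoSpin (Qtab u) :=
    Finset.sum_congr rfl fun k _ => by rw [hQ k]
  obtain ⟨i0, hσi0⟩ : ∃ i0 : Fin n, u.σ i0 = ⟨j - 1, by omega⟩ :=
    ⟨u.σ⁻¹ _, Equiv.apply_symm_apply u.σ _⟩
  obtain ⟨i1, hσi1⟩ : ∃ i1 : Fin n, u.σ i1 = ⟨j, by omega⟩ :=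
    ⟨u.σ⁻¹ _, Equiv.apply_symm_apply u.σ _⟩
  obtain ⟨k1, hk1⟩ : ∃ k1 : Fin r, (k1 : ℕ) = (u.a i0).val := ⟨⟨_, ZMod.val_lt _⟩, rfl⟩
  obtain ⟨k2, hk2⟩ : ∃ k2 : Fin r, (k2 : ℕ) = (u.a i1).val := ⟨⟨_, ZMod.val_lt _⟩, rfl⟩
  have hne01 : u.a i0 ≠ u.a i1 := by
    have e0 : u.σ⁻¹ (⟨j - 1, by omega⟩ : Fin n) = i0 := by rw [← hσi0]; simp
    have e1 : u.σ⁻¹ (⟨j, by omega⟩ : Fin n) = i1 := by rw [← hσi1]; simp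
    intro hEq
    apply ha
    rw [e0, e1]
    exact hEq
  have hk : k1 ≠ k2 := by
    intro h
    apply hne01
    apply ZMod.val_injective r
    rw [← hk1, ← hk2, h]
  have hj1 : j ∈ labels (Ptab u k1) := by
    rw [labels_Ptab, List.mem_toFinset, mem_fst_wordPairs]
    exact ⟨i0, hk1.symm, by rw [hσi0]; show (j - 1) + 1 = j; omega⟩
  have hj2 : j + 1 ∈ labels (Ptab u k2) := by
    rw [labels_Ptab, List.mem_toFinset, mem_fst_wordPairs]
    exact ⟨i1, hk2.symm, by rw [hσi1]⟩
  have hmemP : ∀ k : Fin r, ∀ x ∈ labels (Ptab u k),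
      (x = j → k = k1) ∧ (x = j + 1 → k = k2) := by
    intro k x hx
    rw [labels_Ptab, List.mem_toFinset, mem_fst_wordPairs] at hx
    obtain ⟨m, hmk, hmv⟩ := hx
    constructor
    · intro hxj
      have hm1 : u.σ m = ⟨j - 1, by omega⟩ :=
        Fin.ext (show ((u.σ m : Fin n) : ℕ) = j - 1 by omega)
      have hm : m = i0 := u.σ.injective (hm1.trans hσi0.symm)
      apply Fin.ext
      rw [hk1, ← hmk, hm]
    · intro hxj
      have hm1 : u.σ m = ⟨j, by omega⟩ :=
        Fin.ext (show ((u.σ m : Fin n) : ℕ) = j by omega)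
      have hm : m = i1 := u.σ.injective (hm1.trans hσi1.symm)
      apply Fin.ext
      rw [hk2, ← hmk, hm]
  have hodd : Odd (invMulti (Ptab (Lop u j h1 h2)) + invMulti (Ptab u)) := by
    rw [funext hP]
    exact invMulti_fsw_odd (Ptab u) j k1 k2 hk hj1 hj2 hmemP
  have hsignP : signMulti (Ptab (Lop u j h1 h2)) = - signMulti (Ptab u) :=
    signMulti_neg _ _ hodd
  have hsignQ : signMulti (Qtab (Lop u j h1 h2)) = signMulti (Qtab u) := by
    rw [funext hQ]
  exact piStat_neg_of i u _ hE hSP hSQ (by rw [hsignP, hsignQ]; ring)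

lemma step_Rop_pi [NeZero r] (u : GW r n) (j : ℕ) (h1 : 1 ≤ j) (h2 : j + 1 ≤ n)
    (ha : RightAdm u j h1 h2) (i : ℕ) :
    piStat r n i (Rop u j h1 h2) = - piStat r n i u := by
  have hP := Ptab_Rop u j h1 h2 ha
  have hQ := Qtab_Rop u j h1 h2 ha
  have hE : eMulti (Ptab (Rop u j h1 h2)) = eMulti (Ptab u) :=
    Finset.sum_congr rfl fun k _ => by rw [hP k]
  have hSP : twoSpin (Ptab (Rop u j h1 h2)) = twoSpin (Ptab u) :=
    Finset.sum_congr rfl fun k _ => by rw [hP k]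
  have hSQ : twoSpin (Qtab (Rop u j h1 h2)) = twoSpin (Qtab u) :=
    Finset.sum_congr rfl fun k _ => by rw [hQ k, sizeTab_mapTab]
  obtain ⟨k1, hk1⟩ : ∃ k1 : Fin r, (k1 : ℕ) = (u.a ⟨j - 1, by omega⟩).val :=
    ⟨⟨_, ZMod.val_lt _⟩, rfl⟩
  obtain ⟨k2, hk2⟩ : ∃ k2 : Fin r, (k2 : ℕ) = (u.a ⟨j, by omega⟩).val :=
    ⟨⟨_, ZMod.val_lt _⟩, rfl⟩
  have hk : k1 ≠ k2 := by
    intro h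
    apply ha
    apply ZMod.val_injective r
    rw [← hk1, ← hk2, h]
  have hj1 : j ∈ labels (Qtab u k1) := by
    rw [labels_Qtab, List.mem_toFinset, mem_snd_wordPairs]
    exact ⟨⟨j - 1, by omega⟩, hk1.symm, by show (j - 1) + 1 = j; omega⟩
  have hj2 : j + 1 ∈ labels (Qtab u k2) := by
    rw [labels_Qtab, List.mem_toFinset, mem_snd_wordPairs]
    exact ⟨⟨j, by omega⟩, hk2.symm, rfl⟩
  have hmemQ : ∀ k : Fin r, ∀ x ∈ labels (Qtab u k),
      (x = j → k = k1) ∧ (x = j + 1 → k = k2) := by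
    intro k x hx
    rw [labels_Qtab, List.mem_toFinset, mem_snd_wordPairs] at hx
    obtain ⟨m, hmk, hmv⟩ := hx
    constructor
    · intro hxj
      have hm : m = ⟨j - 1, by omega⟩ := Fin.ext (show (m : ℕ) = j - 1 by omega)
      apply Fin.ext
      rw [hk1, ← hmk, hm]
    · intro hxj
      have hm : m = ⟨j, by omega⟩ := Fin.ext (show (m : ℕ) = j by omega)
      apply Fin.ext
      rw [hk2, ← hmk, hm]
  have hodd : Odd (invMulti (Qtab (Rop u j h1 h2)) + invMulti (Qtab u)) := by
    rw [funext hQ]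
    exact invMulti_fsw_odd (Qtab u) j k1 k2 hk hj1 hj2 hmemQ
  have hsignQ : signMulti (Qtab (Rop u j h1 h2)) = - signMulti (Qtab u) :=
    signMulti_neg _ _ hodd
  have hsignP : signMulti (Ptab (Rop u j h1 h2)) = signMulti (Ptab u) := by
    rw [funext hP]
  exact piStat_neg_of i u _ hE hSP hSQ (by rw [hsignP, hsignQ]; ring)

lemma step_Lop_sgn (u : GW r n) (j : ℕ) (h1 : 1 ≤ j) (h2 : j + 1 ≤ n) (i : ℕ) :
    sgnRep r n i (Lop u j h1 h2) = - sgnRep r n i u := by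
  unfold sgnRep
  have hsum : ∑ m, ((Lop u j h1 h2).a m).val = ∑ m, (u.a m).val := by rw [Lop_a]
  have hσ : (Lop u j h1 h2).σ = Equiv.swap (⟨j - 1, by omega⟩ : Fin n) ⟨j, by omega⟩ * u.σ := rfl
  have hsign : Equiv.Perm.sign (Lop u j h1 h2).σ = - Equiv.Perm.sign u.σ := by
    rw [hσ, Equiv.Perm.sign_mul,
      Equiv.Perm.sign_swap (Fin.ne_of_val_ne (show j - 1 ≠ j by omega))]
    exact neg_one_mul _
  rw [hsum, hsign]
  push_cast
  ring

lemma step_Rop_sgn (u : GW r n) (j : ℕ) (h1 : 1 ≤ j) (h2 : j + 1 ≤ n) (i : ℕ) :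
    sgnRep r n i (Rop u j h1 h2) = - sgnRep r n i u := by
  unfold sgnRep
  have hsum : ∑ m, ((Rop u j h1 h2).a m).val = ∑ m, (u.a m).val := by
    rw [show (Rop u j h1 h2).a = fun m => u.a
      (Equiv.swap (⟨j - 1, by omega⟩ : Fin n) ⟨j, by omega⟩ m) from funext (Rop_a u j h1 h2)]
    exact Equiv.sum_comp (Equiv.swap (⟨j - 1, by omega⟩ : Fin n) ⟨j, by omega⟩)
      (fun m => (u.a m).val)
  have hσ : (Rop u j h1 h2).σ = u.σ * Equiv.swap (⟨j - 1, by omega⟩ : Fin n) ⟨j, by omega⟩ := rfl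
  have hsign : Equiv.Perm.sign (Rop u j h1 h2).σ = - Equiv.Perm.sign u.σ := by
    rw [hσ, Equiv.Perm.sign_mul,
      Equiv.Perm.sign_swap (Fin.ne_of_val_ne (show j - 1 ≠ j by omega))]
    exact mul_neg_one _
  rw [hsum, hsign]
  push_cast
  ring

end Step

end RSAux
/-- **Lemma.** Let `w ∈ W_n` and let `wt` be an ascending representative of the
equivalence class of `w` under the relation generated by admissible operators.
Then for each `0 ≤ i ≤ r - 1`, `π_i w = sgn_i w` if and only if
`π_i wt = sgn_i wt`. -/
theorem piStat_eq_sgn_iff_of_ascending_rep (r n : ℕ) (hr : 1 ≤ r) (hn : 1 ≤ n)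
    (w wt : GW r n) (hasc : AscendingElem wt)
    (hrel : Relation.EqvGen (AdmStep r n) w wt) (i : ℕ) (hi : i ≤ r - 1) :
    piStat r n i w = sgnRep r n i w ↔ piStat r n i wt = sgnRep r n i wt := by
  haveI : NeZero r := ⟨by omega⟩
  have key : ∀ a b : GW r n, AdmStep r n a b →
      (piStat r n i a = sgnRep r n i a ↔ piStat r n i b = sgnRep r n i b) := by
    intro a b h
    cases h with
    | left j h1 h2 ha =>
      rw [RSAux.step_Lop_pi a j h1 h2 ha i, RSAux.step_Lop_sgn a j h1 h2 i, neg_inj]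
    | right j h1 h2 ha =>
      rw [RSAux.step_Rop_pi a j h1 h2 ha i, RSAux.step_Rop_sgn a j h1 h2 i, neg_inj]
  clear hasc hi
  induction hrel with
  | rel a b h => exact key a b h
  | refl a => exact Iff.rfl
  | symm a b _ ih => exact ih.symm
  | trans a b c _ _ ih1 ih2 => exact ih1.trans ih2
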